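/- arXiv:math/0701892 — 3 statements merged into one kernel-verified Lean document; each statement's English description precedes it below -/
import Mathlib

section
/- Let S be a finite p-group, embedded in the symmetric group Σ = Sym(S) via the Cayley (left regular) embedding. Then for any subgroups P, Q ≤ S and any injective group homomorphism φ : P → Q, there exists σ ∈ Σ such that σ⁻¹ u σ = φ(u) for all u ∈ P. -/
/-- Every injective homomorphism between subgroups of a finite
`p`-group `S` is realized by conjugation by a permutation of `S`, where `S`
is embedded in `Equiv.Perm S` via the Cayley (left regular) embedding. -/
theorem stmt0 (p : ℕ) (hp : p.Prime) (S : Type*) [Group S] [Fintype S]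
    (hS : IsPGroup p S) (P Q : Subgroup S) (φ : ↥P →* ↥Q)
    (hφ : Function.Injective φ) :
    ∃ σ : Equiv.Perm S, ∀ u : ↥P,
      σ⁻¹ * (Equiv.mulLeft (u : S)) * σ = Equiv.mulLeft ((φ u : ↥Q) : S) := by
  classical
  set f : ↥P →* S := Q.subtype.comp φ with hf
  have hfinj : Function.Injective f := Subtype.coe_injective.comp hφ
  set K : Subgroup S := f.range with hK
  let ψ : ↥P ≃* ↥K := MonoidHom.ofInjective hfinj
  obtain ⟨T, hT, -⟩ := P.exists_isComplement_right 1
  obtain ⟨T', hT', -⟩ := K.exists_isComplement_right 1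
  have hPT : Subgroup.IsComplement (P : Set S) T := hT
  have hKT' : Subgroup.IsComplement (K : Set S) T' := hT'
  have hPK : Nat.card ↥((P : Set S)) = Nat.card ↥((K : Set S)) := Nat.card_congr ψ.toEquiv
  have hcard : Nat.card T' = Nat.card T := by
    have h12 := hPT.card_mul_card.trans hKT'.card_mul_card.symm
    rw [hPK] at h12
    exact (Nat.eq_of_mul_eq_mul_left Nat.card_pos h12).symm
  obtain ⟨e⟩ : Nonempty (↥T' ≃ ↥T) := Finite.card_eq.mp hcard
  let σ : Equiv.Perm S :=
    hKT'.equiv.trans ((ψ.symm.toEquiv.prodCongr e).trans hPT.equiv.symm)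
  have key : ∀ (u : ↥P) (x : S), σ ((f u) * x) = (u : S) * σ x := by
    intro u x
    have hu : (f u : S) ∈ K := ⟨u, rfl⟩
    have h1 : hKT'.equiv ((f u) * x)
        = (⟨f u, hu⟩ * (hKT'.equiv x).fst, (hKT'.equiv x).snd) :=
      hKT'.equiv_mul_left_of_mem hu
    have h2 : ψ.symm ⟨f u, hu⟩ = u := by
      have : ψ u = ⟨f u, hu⟩ := Subtype.ext rfl
      rw [← this, MulEquiv.symm_apply_apply]
    show hPT.equiv.symm (ψ.symm (hKT'.equiv ((f u) * x)).fst,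
        e (hKT'.equiv ((f u) * x)).snd)
      = (u : S) * hPT.equiv.symm (ψ.symm (hKT'.equiv x).fst, e (hKT'.equiv x).snd)
    rw [h1]
    simp only [map_mul, h2]
    rw [Subgroup.IsComplement.equiv_symm_apply, Subgroup.IsComplement.equiv_symm_apply]
    push_cast
    rw [mul_assoc]
  refine ⟨σ, fun u => ?_⟩
  ext x
  simp only [Equiv.Perm.coe_mul, Function.comp_apply, Equiv.Perm.inv_def,
    Equiv.coe_mulLeft]
  have : ((φ u : ↥Q) : S) = f u := rfl
  rw [this, ← key u x, Equiv.symm_apply_apply]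
end

section
/- Any action of a finite group H on a (nonempty) tree by graph automorphisms, such that no element of H swaps the two endpoints of any edge, has a fixed vertex. -/
open SimpleGraph

section Aux

variable {V : Type*} {T : SimpleGraph V}

/-- In a tree, every path realizes the distance. -/
lemma aux_tree_path_length (hT : T.IsTree) {x y : V} {p : T.Walk x y} (hp : p.IsPath) :
    p.length = T.dist x y := by
  obtain ⟨q, hq, hql⟩ := hT.isConnected.exists_path_of_dist x y
  have : p = q := (hT.existsUnique_path x y).unique hp hq
  rw [this, hql]

/-- Key geometric lemma: if `2 ≤ dist u u'`, there is a neighbor `m` of `u` on the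
geodesic to `u'` which is strictly closer than `u` or `u'` to every vertex. -/
lemma aux_center_step (hT : T.IsTree) {u u' : V} (h2 : 2 ≤ T.dist u u') :
    ∃ m : V, T.Adj u m ∧ ∀ x : V, T.dist x m < T.dist x u ∨ T.dist x m < T.dist x u' := by
  classical
  obtain ⟨P, hP, hPl⟩ := hT.isConnected.exists_path_of_dist u u'
  cases P with
  | nil => simp at h2
  | @cons _ m _ hadj q =>
    refine ⟨m, hadj, fun x => ?_⟩
    rw [Walk.cons_isPath_iff] at hP
    obtain ⟨hq, huq⟩ := hP
    rw [Walk.length_cons] at hPl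
    obtain ⟨Q, hQ, hQl⟩ := hT.isConnected.exists_path_of_dist x u
    by_cases hm : m ∈ Q.support
    · -- the path from x to u passes through m, so dist x m = dist x u - 1
      left
      have hdrop : (Q.dropUntil m hm).IsPath := hQ.dropUntil hm
      have htake : (Q.takeUntil m hm).IsPath := hQ.takeUntil hm
      have hdl : (Q.dropUntil m hm).length = T.dist m u := aux_tree_path_length hT hdrop
      have htl : (Q.takeUntil m hm).length = T.dist x m := aux_tree_path_length hT htake
      have hmu : T.dist m u = 1 := dist_eq_one_iff_adj.mpr hadj.symm
      have hsum : (Q.takeUntil m hm).length + (Q.dropUntil m hm).length = Q.length := by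
        rw [← Walk.length_append, Q.take_spec hm]
      omega
    · -- the path from x to u avoids m; then x→u→u' is a path
      right
      -- supports of Q and q are disjoint
      have hdisj : ∀ w, w ∈ Q.support → w ∉ q.support := by
        intro w hwQ hwq
        -- two distinct paths from w to u
        have hp1 : (Q.dropUntil w hwQ).IsPath := hQ.dropUntil hwQ
        have hm1 : m ∉ (Q.dropUntil w hwQ).support :=
          fun hc => hm (Q.support_dropUntil_subset hwQ hc)
        have htk : (q.takeUntil w hwq).IsPath := hq.takeUntil hwq
        have hu2 : u ∉ (q.takeUntil w hwq).support :=
          fun hc => huq (q.support_takeUntil_subset hwq hc)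
        have hp2' : (Walk.cons hadj (q.takeUntil w hwq)).IsPath :=
          (Walk.cons_isPath_iff _ _).mpr ⟨htk, hu2⟩
        have hp2 : (Walk.cons hadj (q.takeUntil w hwq)).reverse.IsPath := hp2'.reverse
        have heq : Q.dropUntil w hwQ = (Walk.cons hadj (q.takeUntil w hwq)).reverse :=
          (hT.existsUnique_path w u).unique hp1 hp2
        have hm2 : m ∈ (Walk.cons hadj (q.takeUntil w hwq)).reverse.support := by
          rw [Walk.support_reverse, List.mem_reverse, Walk.support_cons]
          exact List.mem_cons_of_mem _ (Walk.start_mem_support _)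
        rw [← heq] at hm2
        exact hm1 hm2
      -- Q ++ cons hadj q is a path from x to u'
      have hpath : (Q.append (Walk.cons hadj q)).IsPath := by
        rw [Walk.isPath_def, Walk.support_append]
        apply List.Nodup.append hQ.support_nodup
        · rw [Walk.support_cons, List.tail_cons]
          exact hq.support_nodup
        · rw [Walk.support_cons, List.tail_cons]
          intro w hw1 hw2
          exact hdisj w hw1 hw2
      have hlen := aux_tree_path_length hT hpath
      rw [Walk.length_append, Walk.length_cons, hQl] at hlen
      have htri : T.dist x m ≤ T.dist x u + T.dist u m :=
        hT.isConnected.dist_triangle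
      have hum : T.dist u m = 1 := dist_eq_one_iff_adj.mpr hadj
      omega

end Aux

/-- Any action of a finite group `H` on a (nonempty) tree by
graph automorphisms with no edge inversions has a fixed vertex. -/
theorem stmt3 (H : Type*) [Group H] [Finite H] (V : Type*) [MulAction H V]
    (T : SimpleGraph V) (hT : T.IsTree)
    (hact : ∀ (h : H) (u v : V), T.Adj u v → T.Adj (h • u) (h • v))
    (hcell : ∀ (h : H) (u v : V), T.Adj u v → ¬(h • u = v ∧ h • v = u)) :
    ∃ v : V, ∀ h : H, h • v = v := by
  classical
  have hconn := hT.isConnected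
  obtain ⟨v₀⟩ := hconn.nonempty
  have : Fintype H := Fintype.ofFinite H
  -- distance is preserved by the action
  have hdist_le : ∀ (h : H) (u v : V), T.dist (h • u) (h • v) ≤ T.dist u v := by
    intro h u v
    obtain ⟨p, _, hpl⟩ := hconn.exists_path_of_dist u v
    let f : T →g T := ⟨fun x => h • x, fun {a b} hab => hact h a b hab⟩
    calc T.dist (h • u) (h • v) = T.dist (f u) (f v) := rfl
      _ ≤ (p.map f).length := dist_le (p.map f)
      _ = p.length := p.length_map f
      _ = T.dist u v := hpl
  have hdist : ∀ (h : H) (u v : V), T.dist (h • u) (h • v) = T.dist u v := by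
    intro h u v
    refine le_antisymm (hdist_le h u v) ?_
    have := hdist_le h⁻¹ (h • u) (h • v)
    simpa using this
  -- the orbit of v₀
  set S : Finset V := Finset.image (fun h : H => h • v₀) Finset.univ with hS
  have hSne : S.Nonempty := ⟨(1 : H) • v₀, Finset.mem_image.mpr ⟨1, Finset.mem_univ _, rfl⟩⟩
  have hSinv : ∀ (h : H) (x : V), x ∈ S → h • x ∈ S := by
    intro h x hx
    rw [hS, Finset.mem_image] at hx ⊢
    obtain ⟨g, _, rfl⟩ := hx
    exact ⟨h * g, Finset.mem_univ _, mul_smul h g v₀⟩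
  -- the radius function
  set r : V → ℕ := fun u => S.sup' hSne (fun x => T.dist u x) with hr
  have hr_le : ∀ u x, x ∈ S → T.dist u x ≤ r u := fun u x hx =>
    Finset.le_sup' (fun x => T.dist u x) hx
  have hr_inv : ∀ (h : H) (u : V), r (h • u) = r u := by
    have key : ∀ (h : H) (u : V), r (h • u) ≤ r u := by
      intro h u
      apply Finset.sup'_le
      intro x hx
      have : T.dist (h • u) x = T.dist u (h⁻¹ • x) := by
        rw [← hdist h⁻¹ (h • u) x, inv_smul_smul]
      rw [this]
      exact hr_le u _ (hSinv h⁻¹ x hx)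
    intro h u
    refine le_antisymm (key h u) ?_
    have := key h⁻¹ (h • u)
    simpa using this
  -- the minimum radius
  set r₀ : ℕ := sInf (Set.range r) with hr₀
  haveI : Nonempty V := ⟨v₀⟩
  obtain ⟨c, hc⟩ : ∃ c, r c = r₀ := by
    have : r₀ ∈ Set.range r := Nat.sInf_mem (Set.range_nonempty r)
    obtain ⟨c, hc⟩ := this
    exact ⟨c, hc⟩
  have hr₀_le : ∀ u, r₀ ≤ r u := fun u => Nat.sInf_le ⟨u, rfl⟩
  -- vertices of minimal radius are pairwise equal or adjacent
  have hC : ∀ u u', r u = r₀ → r u' = r₀ → u = u' ∨ T.Adj u u' := by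
    intro u u' hu hu'
    by_contra hcon
    push_neg at hcon
    obtain ⟨hne, hnadj⟩ := hcon
    have hd0 : T.dist u u' ≠ 0 :=
      dist_ne_zero_iff_ne_and_reachable.mpr ⟨hne, hconn.preconnected u u'⟩
    have hd1 : T.dist u u' ≠ 1 := fun hc => hnadj (dist_eq_one_iff_adj.mp hc)
    have h2 : 2 ≤ T.dist u u' := by omega
    obtain ⟨m, _, hm⟩ := aux_center_step hT h2
    have hrm : r m < r₀ := by
      have : ∀ x ∈ S, T.dist m x < r₀ := by
        intro x hx
        rcases hm x with hlt | hlt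
        · calc T.dist m x = T.dist x m := dist_comm
            _ < T.dist x u := hlt
            _ = T.dist u x := dist_comm
            _ ≤ r u := hr_le u x hx
            _ = r₀ := hu
        · calc T.dist m x = T.dist x m := dist_comm
            _ < T.dist x u' := hlt
            _ = T.dist u' x := dist_comm
            _ ≤ r u' := hr_le u' x hx
            _ = r₀ := hu'
      exact (Finset.sup'_lt_iff hSne).mpr this
    exact absurd (hr₀_le m) (by omega)
  -- no triangles in a tree
  have htri : ∀ a b c' : V, T.Adj a b → T.Adj b c' → T.Adj a c' → False := by
    intro a b c' hab hbc hac
    have hp2 : (Walk.cons hab (Walk.cons hbc Walk.nil)).IsPath := by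
      simp [Walk.isPath_def, hab.ne, hbc.ne, hac.ne]
    have hlen := aux_tree_path_length hT hp2
    rw [dist_eq_one_iff_adj.mpr hac] at hlen
    simp at hlen
  -- conclude
  by_cases hfix : ∀ h : H, h • c = c
  · exact ⟨c, hfix⟩
  push_neg at hfix
  obtain ⟨h₀, hh₀⟩ := hfix
  set c' := h₀ • c with hc'
  have hrc' : r c' = r₀ := by rw [hc', hr_inv]; exact hc
  have hadj : T.Adj c c' := (hC c c' hc hrc').resolve_left (fun e => hh₀ e.symm)
  have horb : ∀ h : H, h • c = c ∨ h • c = c' := by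
    intro h
    have hrh : r (h • c) = r₀ := by rw [hr_inv]; exact hc
    by_contra hcon
    push_neg at hcon
    obtain ⟨h1, h2⟩ := hcon
    have a1 : T.Adj c (h • c) := (hC c _ hc hrh).resolve_left (fun e => h1 e.symm)
    have a2 : T.Adj c' (h • c) := (hC c' _ hrc' hrh).resolve_left (fun e => h2 e.symm)
    exact htri c c' (h • c) hadj a2 a1
  have horb' : ∀ h : H, h • c' = c ∨ h • c' = c' := by
    intro h
    have hrh : r (h • c') = r₀ := by rw [hr_inv]; exact hrc'
    by_contra hcon
    push_neg at hcon
    obtain ⟨h1, h2⟩ := hcon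
    have a1 : T.Adj c (h • c') := (hC c _ hc hrh).resolve_left (fun e => h1 e.symm)
    have a2 : T.Adj c' (h • c') := (hC c' _ hrc' hrh).resolve_left (fun e => h2 e.symm)
    exact htri c c' (h • c') hadj a2 a1
  exfalso
  have h1 : h₀ • c = c' := (horb h₀).resolve_left hh₀
  have h2 : h₀ • c' = c := by
    rcases horb' h₀ with h | h
    · exact h
    · exact absurd (MulAction.injective h₀ (h.trans hc')) hh₀
  exact hcell h₀ c c' hadj ⟨h1, h2⟩
end

section
/- Let p be an odd prime, A = (C_p)^3, B ≤ Aut(A) of order p acting by a single Jordan block, S = A ⋊ B, Z = Z(S), and E = Z × B ≤ S. Then C_S(E) = E, and N_S(E) is a nonabelian group of order p^3 and exponent p. -/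
def zmodModuleOfExp (p : ℕ) [NeZero p] (M : Type*) [AddCommGroup M] (h : ∀ x : M, p • x = 0) :
    Module (ZMod p) M := AddCommGroup.zmodModule h

section LinPart

open Module LinearMap


lemma stmt17_lin (p : ℕ) (hp : p.Prime) (M : Type*) [AddCommGroup M] [Module (ZMod p) M]
    [Finite M] (hcard : Nat.card M = p ^ 3)
    (ν : Module.End (ZMod p) M) (hνp : ν ^ p = 0)
    (hindec : ¬∃ U V : Submodule (ZMod p) M,
      (∀ x ∈ U, ν x ∈ U) ∧ (∀ x ∈ V, ν x ∈ V) ∧ U ≠ ⊥ ∧ V ≠ ⊥ ∧ U ⊓ V = ⊥ ∧ U ⊔ V = ⊤) :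
    Nat.card (LinearMap.ker ν) = p ∧ Nat.card (LinearMap.ker (ν * ν)) = p ^ 2 := by
  haveI : Fact p.Prime := ⟨hp⟩
  haveI : Module.Finite (ZMod p) M := Module.Finite.of_finite
  have hp2 : 2 ≤ p := hp.two_le
  haveI : Fintype M := Fintype.ofFinite _
  haveI : Nontrivial M := by
    rw [← Fintype.one_lt_card_iff_nontrivial, ← Nat.card_eq_fintype_card, hcard]
    exact Nat.one_lt_pow (by norm_num) hp.one_lt
  have hcard_sub : ∀ W : Submodule (ZMod p) M, Nat.card W = p ^ (finrank (ZMod p) W) := by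
    intro W
    haveI : Fintype W := Fintype.ofFinite _
    rw [Nat.card_eq_fintype_card, card_eq_pow_finrank (K := ZMod p), ZMod.card]
  have hfr : finrank (ZMod p) M = 3 := by
    haveI : Fintype M := Fintype.ofFinite _
    have h := card_eq_pow_finrank (K := ZMod p) (V := M)
    rw [ZMod.card, ← Nat.card_eq_fintype_card, hcard] at h
    exact (Nat.pow_right_injective hp2 h.symm)
  have hpow_succ : ∀ (m : ℕ) (x : M), (ν ^ (m + 1)) x = (ν ^ m) (ν x) := by
    intro m x; rw [pow_succ, Module.End.mul_apply]
  have hpow_succ' : ∀ (m : ℕ) (x : M), (ν ^ (m + 1)) x = ν ((ν ^ m) x) := by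
    intro m x; rw [pow_succ', Module.End.mul_apply]
  -- ν² ≠ 0
  have hν2 : ν * ν ≠ 0 := by
    intro h2
    apply hindec
    by_cases h0 : ν = 0
    · obtain ⟨x, hx⟩ := exists_ne (0 : M)
      obtain ⟨V, hV⟩ := Submodule.exists_isCompl (Submodule.span (ZMod p) {x})
      refine ⟨_, V, ?_, ?_, ?_, ?_, hV.inf_eq_bot, hV.sup_eq_top⟩
      · intro y _; rw [h0]; simpa using zero_mem _
      · intro y _; rw [h0]; simpa using zero_mem _
      · simpa [Submodule.span_singleton_eq_bot] using hx
      · intro hVbot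
        have hU : Submodule.span (ZMod p) {x} = ⊤ := by
          have h := hV.sup_eq_top; rwa [hVbot, sup_bot_eq] at h
        have h1 : finrank (ZMod p) (Submodule.span (ZMod p) {x}) = 1 :=
          finrank_span_singleton hx
        rw [hU, finrank_top, hfr] at h1; norm_num at h1
    · obtain ⟨v, hv⟩ : ∃ v, ν v ≠ 0 := by
        by_contra h; push_neg at h; exact h0 (LinearMap.ext fun x => by simpa using h x)
      have hv0 : v ≠ 0 := fun h => hv (by rw [h, map_zero])
      have hν2x : ∀ x, ν (ν x) = 0 := fun x => by
        rw [← Module.End.mul_apply, h2, LinearMap.zero_apply]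
      have hrange_le : LinearMap.range ν ≤ LinearMap.ker ν := by
        rintro y ⟨x, rfl⟩; exact LinearMap.mem_ker.2 (hν2x x)
      have hrk := LinearMap.finrank_range_add_finrank_ker ν
      rw [hfr] at hrk
      have hr1 : finrank (ZMod p) (LinearMap.range ν) ≤ finrank (ZMod p) (LinearMap.ker ν) :=
        Submodule.finrank_mono hrange_le
      have hrzero : finrank (ZMod p) (LinearMap.range ν) ≠ 0 := by
        rw [Ne, Submodule.finrank_eq_zero, LinearMap.range_eq_bot]
        intro h; exact hv (by rw [h]; rfl)
      have hKfr : finrank (ZMod p) (LinearMap.ker ν) = 2 := by omega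
      set U := Submodule.span (ZMod p) {v, ν v} with hUdef
      have hvU : v ∈ U := Submodule.subset_span (by simp)
      have hνvU : ν v ∈ U := Submodule.subset_span (by simp)
      have hmap : Submodule.map ν U ≤ U := by
        rw [hUdef, Submodule.map_span]
        refine Submodule.span_le.2 ?_
        rintro y ⟨z, hz, rfl⟩
        rcases hz with rfl | hz
        · exact hνvU
        · rcases hz with rfl
          rw [hν2x]; exact zero_mem _
      have hUinv : ∀ x ∈ U, ν x ∈ U := fun x hx => hmap (Submodule.mem_map_of_mem hx)
      have hUle : finrank (ZMod p) U ≤ 2 := by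
        have heq : U = Submodule.span (ZMod p) {v} ⊔ Submodule.span (ZMod p) {ν v} := by
          rw [hUdef, ← Submodule.span_insert]
        have hs := Submodule.finrank_sup_add_finrank_inf_eq
          (Submodule.span (ZMod p) {v}) (Submodule.span (ZMod p) {ν v})
        rw [finrank_span_singleton hv0, finrank_span_singleton hv] at hs
        rw [heq]; omega
      have hKnotU : ¬ LinearMap.ker ν ≤ U := by
        intro hKU
        have hlt : LinearMap.ker ν < U := lt_of_le_of_ne hKU (fun h => by
          rw [← h] at hvU; exact hv (LinearMap.mem_ker.1 hvU))
        have := Submodule.finrank_lt_finrank_of_lt hlt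
        omega
      obtain ⟨w, hwK, hwU⟩ := SetLike.not_le_iff_exists.mp hKnotU
      have hw0 : w ≠ 0 := fun h => hwU (h ▸ zero_mem U)
      have hνw : ν w = 0 := LinearMap.mem_ker.1 hwK
      set V := Submodule.span (ZMod p) {w} with hVdef
      have hVU : ∀ c : ZMod p, c • w ∈ U → c = 0 := by
        intro c hc
        by_contra hcne
        exact hwU (by simpa [inv_smul_smul₀ hcne] using U.smul_mem c⁻¹ hc)
      refine ⟨U, V, hUinv, ?_, ?_, ?_, ?_, ?_⟩
      · intro x hx
        obtain ⟨c, rfl⟩ := Submodule.mem_span_singleton.1 hx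
        rw [map_smul, hνw, smul_zero]; exact zero_mem _
      · intro h; rw [h] at hvU; exact hv0 (Submodule.mem_bot _ |>.1 hvU)
      · rw [hVdef, Ne, Submodule.span_singleton_eq_bot]; exact hw0
      · rw [eq_bot_iff]; rintro x ⟨hxU, hxV⟩
        obtain ⟨c, rfl⟩ := Submodule.mem_span_singleton.1 hxV
        rw [Submodule.mem_bot, hVU c hxU, zero_smul]
      · have hνvV : Submodule.span (ZMod p) {ν v} ⊔ V ≤ LinearMap.ker ν := by
          refine sup_le (Submodule.span_le.2 ?_) (Submodule.span_le.2 ?_)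
          · simp only [Set.singleton_subset_iff, SetLike.mem_coe]
            exact LinearMap.mem_ker.2 (hν2x v)
          · simpa using hwK
        have hKspan : Submodule.span (ZMod p) {ν v} ⊔ V = LinearMap.ker ν := by
          refine Submodule.eq_of_le_of_finrank_le hνvV ?_
          have hlt : Submodule.span (ZMod p) {ν v} < Submodule.span (ZMod p) {ν v} ⊔ V := by
            refine lt_of_le_of_ne le_sup_left (fun h => ?_)
            have hwmem : w ∈ Submodule.span (ZMod p) {ν v} ⊔ V :=
              Submodule.mem_sup_right (Submodule.mem_span_singleton_self w)
            rw [← h] at hwmem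
            exact hwU ((Submodule.span_le.2 (by simpa using hνvU)) hwmem)
          have := Submodule.finrank_lt_finrank_of_lt hlt
          rw [finrank_span_singleton hv] at this
          omega
        have hdisj : Submodule.span (ZMod p) {v} ⊓ LinearMap.ker ν = ⊥ := by
          rw [eq_bot_iff]; rintro x ⟨hxv, hxK⟩
          obtain ⟨c, rfl⟩ := Submodule.mem_span_singleton.1 hxv
          rcases eq_or_ne c 0 with rfl | hc
          · simp
          · exfalso
            apply hv
            have : v ∈ LinearMap.ker ν := by
              simpa [inv_smul_smul₀ hc] using (LinearMap.ker ν).smul_mem c⁻¹ hxK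
            exact LinearMap.mem_ker.1 this
        have hsupK : Submodule.span (ZMod p) {v} ⊔ LinearMap.ker ν = ⊤ := by
          apply Submodule.eq_top_of_finrank_eq
          have h := Submodule.finrank_sup_add_finrank_inf_eq
            (Submodule.span (ZMod p) {v}) (LinearMap.ker ν)
          rw [hdisj, finrank_bot, finrank_span_singleton hv0, hKfr] at h
          rw [hfr]; omega
        rw [eq_top_iff, ← hsupK]
        refine sup_le (le_trans ?_ le_sup_left) ?_
        · exact Submodule.span_le.2 (by simpa using hvU)
        · rw [← hKspan]
          refine sup_le (le_trans (Submodule.span_le.2 (by simpa using hνvU)) le_sup_left)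
            le_sup_right
  -- main computation
  have hppos : 0 < p := hp.pos
  have hKne : LinearMap.ker ν ≠ ⊥ := by
    intro hker
    have hinj : ∀ (m : ℕ) (x : M), (ν ^ m) x = 0 → x = 0 := by
      intro m
      induction m with
      | zero => intro x h; simpa using h
      | succ m ih =>
        intro x h
        rw [hpow_succ] at h
        have hx : ν x = 0 := ih _ h
        have : x ∈ LinearMap.ker ν := LinearMap.mem_ker.2 hx
        rw [hker] at this
        exact (Submodule.mem_bot _).1 this
    obtain ⟨x, hx⟩ := exists_ne (0 : M)
    exact hx (hinj p x (by rw [hνp]; rfl))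
  have hk_ge1 : 1 ≤ finrank (ZMod p) (LinearMap.ker ν) := by
    rw [Nat.one_le_iff_ne_zero, Ne, Submodule.finrank_eq_zero]; exact hKne
  have hrk := LinearMap.finrank_range_add_finrank_ker ν
  rw [hfr] at hrk
  have hk_le1 : finrank (ZMod p) (LinearMap.ker ν) ≤ 1 := by
    by_contra hk
    push_neg at hk
    obtain ⟨x0, hx0⟩ : ∃ x, ν (ν x) ≠ 0 := by
      by_contra h; push_neg at h
      exact hν2 (LinearMap.ext fun x => by rw [Module.End.mul_apply, h]; rfl)
    have hr_le1 : finrank (ZMod p) (LinearMap.range ν) ≤ 1 := by omega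
    have hinf : LinearMap.range ν ⊓ LinearMap.ker ν = ⊥ := by
      have hlt : LinearMap.range ν ⊓ LinearMap.ker ν < LinearMap.range ν := by
        refine lt_of_le_of_ne inf_le_left (fun h => ?_)
        have h1 : ν x0 ∈ LinearMap.range ν ⊓ LinearMap.ker ν := by
          rw [h]; exact ⟨x0, rfl⟩
        exact hx0 (LinearMap.mem_ker.1 h1.2)
      have := Submodule.finrank_lt_finrank_of_lt hlt
      have h0 : finrank (ZMod p) (LinearMap.range ν ⊓ LinearMap.ker ν : Submodule (ZMod p) M) = 0 := by
        omega
      rwa [Submodule.finrank_eq_zero] at h0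
    have hchain : ∀ m : ℕ, (ν ^ (m + 1)) x0 ≠ 0 ∧ (ν ^ (m + 1)) x0 ∈ LinearMap.range ν := by
      intro m
      induction m with
      | zero =>
        constructor
        · rw [pow_one]; intro h; exact hx0 (by rw [h, map_zero])
        · rw [pow_one]; exact ⟨x0, rfl⟩
      | succ m ih =>
        have heq : (ν ^ (m + 2)) x0 = ν ((ν ^ (m + 1)) x0) := hpow_succ' (m + 1) x0
        constructor
        · intro h
          rw [heq] at h
          have h1 : (ν ^ (m + 1)) x0 ∈ LinearMap.range ν ⊓ LinearMap.ker ν :=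
            ⟨ih.2, LinearMap.mem_ker.2 h⟩
          rw [hinf] at h1
          exact ih.1 ((Submodule.mem_bot _).1 h1)
        · rw [heq]; exact ⟨_, rfl⟩
    obtain ⟨m, hm⟩ : ∃ m : ℕ, p = m + 1 := ⟨p - 1, (Nat.succ_pred_eq_of_pos hppos).symm⟩
    exact (hchain m).1 (by rw [← hm, hνp]; rfl)
  have hk1 : finrank (ZMod p) (LinearMap.ker ν) = 1 := le_antisymm hk_le1 hk_ge1
  have hKK2 : LinearMap.ker ν ≤ LinearMap.ker (ν * ν) := by
    intro x hx
    have : ν x = 0 := LinearMap.mem_ker.1 hx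
    exact LinearMap.mem_ker.2 (by rw [Module.End.mul_apply, this, map_zero])
  have hKltK2 : LinearMap.ker ν ≠ LinearMap.ker (ν * ν) := by
    intro hEq
    have hstab : ∀ m : ℕ, LinearMap.ker (ν ^ (m + 1)) = LinearMap.ker ν := by
      intro m
      induction m with
      | zero => rw [pow_one]
      | succ m ih =>
        ext x
        constructor
        · intro hx
          have h1 : (ν ^ (m + 1)) (ν x) = 0 := by
            rw [← hpow_succ]; exact LinearMap.mem_ker.1 hx
          have h2 : ν x ∈ LinearMap.ker ν := ih ▸ LinearMap.mem_ker.2 h1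
          have h3 : x ∈ LinearMap.ker (ν * ν) := LinearMap.mem_ker.2 (by
            rw [Module.End.mul_apply]; exact LinearMap.mem_ker.1 h2)
          rw [← hEq] at h3
          exact h3
        · intro hx
          have : ν x = 0 := LinearMap.mem_ker.1 hx
          exact LinearMap.mem_ker.2 (by rw [hpow_succ, this, map_zero])
    obtain ⟨m, hm⟩ : ∃ m : ℕ, p = m + 1 := ⟨p - 1, (Nat.succ_pred_eq_of_pos hppos).symm⟩
    have h1 := hstab m
    rw [← hm, hνp, LinearMap.ker_zero] at h1
    have h2 : finrank (ZMod p) (⊤ : Submodule (ZMod p) M) = 1 := by rw [h1, hk1]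
    rw [finrank_top, hfr] at h2
    norm_num at h2
  have hK2ge : 2 ≤ finrank (ZMod p) (LinearMap.ker (ν * ν)) := by
    have := Submodule.finrank_lt_finrank_of_lt (lt_of_le_of_ne hKK2 hKltK2)
    omega
  have hK2le : finrank (ZMod p) (LinearMap.ker (ν * ν)) ≤ 2 := by
    set φ := ν.domRestrict (LinearMap.ker (ν * ν)) with hφ
    have h1 := LinearMap.finrank_range_add_finrank_ker φ
    have h2 : LinearMap.range φ ≤ LinearMap.ker ν := by
      rintro y ⟨x, rfl⟩
      refine LinearMap.mem_ker.2 ?_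
      rw [hφ, LinearMap.domRestrict_apply]
      have := LinearMap.mem_ker.1 x.2
      rw [Module.End.mul_apply] at this
      exact this
    have h3 : finrank (ZMod p) (LinearMap.range φ) ≤ 1 := hk1 ▸ Submodule.finrank_mono h2
    have h4 : finrank (ZMod p) (LinearMap.ker φ) ≤ 1 := by
      rw [← Submodule.finrank_map_subtype_eq (LinearMap.ker (ν * ν)) (LinearMap.ker φ)]
      refine hk1 ▸ Submodule.finrank_mono ?_
      rintro y ⟨x, hx, rfl⟩
      refine LinearMap.mem_ker.2 ?_
      have := LinearMap.mem_ker.1 hx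
      rw [hφ, LinearMap.domRestrict_apply] at this
      exact this
    omega
  have hK2fr : finrank (ZMod p) (LinearMap.ker (ν * ν)) = 2 := le_antisymm hK2le hK2ge
  refine ⟨?_, ?_⟩
  · rw [hcard_sub, hk1, pow_one]
  · rw [hcard_sub, hK2fr]


end LinPart


lemma stmt17_nupow (p : ℕ) (hp : p.Prime) (hodd : Odd p) {A : Type*} [CommGroup A]
    (hexp : ∀ a : A, a ^ p = 1) (b : MulAut A) (hb : b ^ p = 1)
    [Module (ZMod p) (Additive A)]
    (β : Module.End (ZMod p) (Additive A))
    (hβ : ∀ a : A, β (Additive.ofMul a) = Additive.ofMul (b a)) :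
    (β - 1) ^ p = 0 := by
  have htor : ∀ y : Additive A, p • y = 0 := fun y => by
    have h := congrArg Additive.ofMul (hexp (Additive.toMul y))
    rwa [ofMul_pow, ofMul_one, ofMul_toMul] at h
  have hsm : ∀ r : Module.End (ZMod p) (Additive A), (p : Module.End (ZMod p) (Additive A)) * r = 0 := by
    intro r
    rw [← nsmul_eq_mul]
    exact LinearMap.ext fun x => by
      rw [LinearMap.smul_apply, LinearMap.zero_apply, htor]
  have hpow : ∀ (m : ℕ) (x : Additive A),
      (β ^ m) x = Additive.ofMul ((b ^ m) (Additive.toMul x)) := by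
    intro m
    induction m with
    | zero => intro x; simp
    | succ m ih =>
      intro x
      rw [pow_succ', Module.End.mul_apply, ih, pow_succ', MulAut.mul_apply]
      exact hβ ((b ^ m) (Additive.toMul x))
  have hβp : β ^ p = 1 := by
    refine LinearMap.ext fun x => ?_
    rw [hpow, hb]
    rfl
  obtain ⟨r, hr⟩ := Commute.exists_add_pow_prime_eq hp (Commute.neg_right (Commute.one_right β))
  rw [sub_eq_add_neg, hr, hβp, hodd.neg_one_pow, hsm]
  simp

lemma aux_fix_zpow {A : Type*} [Group A] (b : MulAut A) (a : A) (h : b a = a) :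
    ∀ t : MulAut A, t ∈ Subgroup.zpowers b → t a = a := by
  have hn : ∀ n : ℕ, (b ^ n) a = a := by
    intro n; induction n with
    | zero => simp
    | succ n ih => rw [pow_succ, MulAut.mul_apply, h, ih]
  intro t ht
  obtain ⟨k, hk⟩ := Subgroup.mem_zpowers_iff.mp ht
  rw [← hk]
  obtain ⟨n, rfl | rfl⟩ := Int.eq_nat_or_neg k
  · rw [zpow_natCast]; exact hn n
  · rw [zpow_neg, zpow_natCast, MulAut.inv_def, MulEquiv.symm_apply_eq, hn]

lemma aux_comm_zpow {A : Type*} [Group A] (b : MulAut A) (t : MulAut A)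
    (ht : t ∈ Subgroup.zpowers b) (c : A) : b (t c) = t (b c) := by
  obtain ⟨k, hk⟩ := Subgroup.mem_zpowers_iff.mp ht
  rw [← hk]
  have h := ((Commute.refl b).zpow_right k)
  calc b ((b ^ k) c) = (b * b ^ k) c := rfl
    _ = (b ^ k * b) c := by rw [h]
    _ = (b ^ k) (b c) := rfl

lemma aux_cg {G : Type*} [CommGroup G] (a g X y : G) :
    (a * g) * X * (y * g)⁻¹ = a * X * y⁻¹ := by
  calc (a * g) * X * (y * g)⁻¹ = (a * X * y⁻¹) * (g * g⁻¹) := by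
        rw [mul_inv_rev]; ac_rfl
    _ = a * X * y⁻¹ := by rw [mul_inv_cancel, mul_one]

open scoped IsMulCommutative

theorem grptest (p : ℕ) (hp : p.Prime) (hodd : Odd p)
    (A : Type*) [CommGroup A] [Fintype A]
    (hcard : Nat.card A = p ^ 3) (hexp : ∀ a : A, a ^ p = 1)
    (b : MulAut A) (hb : orderOf b = p)
    (f : A →* A) (hf : ∀ a : A, f a = b a / a)
    (hcardK1 : Nat.card f.ker = p) (hcardK2 : Nat.card (f.comp f).ker = p ^ 2) :
    letI S := A ⋊[(Subgroup.zpowers b).subtype] ↥(Subgroup.zpowers b)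
    letI E : Subgroup S :=
      Subgroup.center S ⊔
        (SemidirectProduct.inr : ↥(Subgroup.zpowers b) →* S).range
    Subgroup.centralizer (E : Set S) = E ∧
    Nat.card ↥(Subgroup.normalizer (E : Set S)) = p ^ 3 ∧
    (¬∀ x y : ↥(Subgroup.normalizer (E : Set S)), x * y = y * x) ∧
    (∀ x : ↥(Subgroup.normalizer (E : Set S)), x ^ p = 1) := by
  haveI : Fact p.Prime := ⟨hp⟩
  show Subgroup.centralizer _ = _ ∧ _
  -- membership lemmas for kernels
  have hmemK1 : ∀ a : A, a ∈ f.ker ↔ b a = a := by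
    intro a; rw [MonoidHom.mem_ker, hf, div_eq_one]
  have hmemK2 : ∀ a : A, a ∈ (f.comp f).ker ↔ b (f a) = f a := by
    intro a; rw [MonoidHom.mem_ker, MonoidHom.comp_apply, hf (f a), div_eq_one]
  have hba : ∀ a : A, b a = a * f a := by
    intro a; rw [hf]; exact (mul_div_cancel a (b a)).symm
  -- invariance of K2 under zpowers
  have hft : ∀ t : MulAut A, t ∈ Subgroup.zpowers b → ∀ c : A, f (t c) = t (f c) := by
    intro t ht c
    rw [hf, hf, aux_comm_zpow b t ht, map_div]
  have hK2inv : ∀ t : MulAut A, t ∈ Subgroup.zpowers b →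
      ∀ a ∈ (f.comp f).ker, t a ∈ (f.comp f).ker := by
    intro t ht a ha
    rw [MonoidHom.mem_ker] at ha ⊢
    rw [MonoidHom.comp_apply] at ha ⊢
    rw [hft t ht a, hft t ht (f a), ha, map_one]
  have hK1K2 : f.ker ≤ (f.comp f).ker := by
    intro a ha
    rw [MonoidHom.mem_ker] at ha ⊢
    rw [MonoidHom.comp_apply, ha, map_one]
  -- the subgroup E'
  let E' : Subgroup (A ⋊[(Subgroup.zpowers b).subtype] ↥(Subgroup.zpowers b)) :=
    { carrier := {x | b x.left = x.left}
      one_mem' := map_one b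
      mul_mem' := by
        intro x y hx hy
        have hx' : b x.left = x.left := hx
        have hy' : b y.left = y.left := hy
        show b (x * y).left = (x * y).left
        rw [SemidirectProduct.mul_left]
        show b (x.left * (x.right : MulAut A) y.left) = _
        rw [map_mul, hx', aux_comm_zpow b _ x.right.2, hy']
        rfl
      inv_mem' := by
        intro x hx
        have hx' : b x.left = x.left := hx
        show b (x⁻¹).left = (x⁻¹).left
        rw [SemidirectProduct.inv_left]
        show b (((x.right⁻¹ : ↥(Subgroup.zpowers b)) : MulAut A) x.left⁻¹) = _
        rw [aux_comm_zpow b _ (x.right⁻¹).2, map_inv, hx']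
        rfl }
  have hmemE' : ∀ x : A ⋊[(Subgroup.zpowers b).subtype] ↥(Subgroup.zpowers b),
      x ∈ E' ↔ b x.left = x.left := fun _ => Iff.rfl
  let β0 : ↥(Subgroup.zpowers b) := ⟨b, Subgroup.mem_zpowers b⟩
  -- E0 = E'
  have hE0 : Subgroup.center (A ⋊[(Subgroup.zpowers b).subtype] ↥(Subgroup.zpowers b)) ⊔
      (SemidirectProduct.inr : ↥(Subgroup.zpowers b) →*
        (A ⋊[(Subgroup.zpowers b).subtype] ↥(Subgroup.zpowers b))).range = E' := by
    apply le_antisymm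
    · refine sup_le ?_ ?_
      · intro z hz
        rw [Subgroup.mem_center_iff] at hz
        have h := hz (SemidirectProduct.inr β0)
        have hl := congrArg SemidirectProduct.left h
        simp only [SemidirectProduct.mul_left, SemidirectProduct.left_inr,
          SemidirectProduct.right_inr, map_one, mul_one, one_mul] at hl
        rw [hmemE']
        exact hl
      · rintro x ⟨t, rfl⟩
        rw [hmemE']
        exact map_one b
    · intro x hx
      rw [hmemE'] at hx
      have hxd : x = SemidirectProduct.inl x.left * SemidirectProduct.inr x.right := by
        rw [← SemidirectProduct.mk_eq_inl_mul_inr]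
      rw [hxd]
      refine Subgroup.mul_mem _ (Subgroup.mem_sup_left ?_) (Subgroup.mem_sup_right ⟨x.right, rfl⟩)
      rw [Subgroup.mem_center_iff]
      intro g
      refine SemidirectProduct.ext ?_ ?_
      · simp only [SemidirectProduct.mul_left, SemidirectProduct.left_inl,
          SemidirectProduct.right_inl, map_one, mul_one]
        rw [show ((Subgroup.zpowers b).subtype g.right) x.left = x.left from
          aux_fix_zpow b x.left hx _ g.right.2]
        exact mul_comm _ _
      · simp only [SemidirectProduct.mul_right, SemidirectProduct.right_inl, mul_one, one_mul]
  -- centralizer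
  have hcent : Subgroup.centralizer (E' : Set _) = E' := by
    apply le_antisymm
    · intro x hx
      rw [Subgroup.mem_centralizer_iff] at hx
      have h := hx (SemidirectProduct.inr β0) (by rw [SetLike.mem_coe, hmemE']; exact map_one b)
      have hl := congrArg SemidirectProduct.left h
      simp only [SemidirectProduct.mul_left, SemidirectProduct.left_inr,
        SemidirectProduct.right_inr, map_one, mul_one, one_mul] at hl
      rw [hmemE']
      exact hl
    · intro x hx
      rw [hmemE'] at hx
      rw [Subgroup.mem_centralizer_iff]
      intro g hg
      rw [SetLike.mem_coe, hmemE'] at hg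
      refine SemidirectProduct.ext ?_ ?_
      · simp only [SemidirectProduct.mul_left]
        rw [show ((Subgroup.zpowers b).subtype x.right) g.left = g.left from
          aux_fix_zpow b g.left hg _ x.right.2,
          show ((Subgroup.zpowers b).subtype g.right) x.left = x.left from
          aux_fix_zpow b x.left hx _ g.right.2]
        exact mul_comm _ _
      · simp only [SemidirectProduct.mul_right]
        exact mul_comm _ _
  -- conjugation formulas
  have hconjL : ∀ x h : A ⋊[(Subgroup.zpowers b).subtype] ↥(Subgroup.zpowers b),
      (x * h * x⁻¹).left
        = x.left * (x.right : MulAut A) h.left * ((h.right : MulAut A) x.left)⁻¹ := by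
    intro x h
    rw [SemidirectProduct.mul_left (x * h) x⁻¹, SemidirectProduct.mul_left x h,
      SemidirectProduct.inv_left, SemidirectProduct.mul_right]
    have hc1 : ((Subgroup.zpowers b).subtype (x.right * h.right))
        (((Subgroup.zpowers b).subtype x.right⁻¹) x.left⁻¹)
        = ((Subgroup.zpowers b).subtype (x.right * h.right * x.right⁻¹)) x.left⁻¹ := by
      rw [map_mul ((Subgroup.zpowers b).subtype) (x.right * h.right) x.right⁻¹]
      rfl
    rw [hc1, mul_inv_cancel_comm]
    show x.left * (x.right : MulAut A) h.left * (h.right : MulAut A) x.left⁻¹ = _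
    rw [map_inv]
  have hconjR : ∀ x h : A ⋊[(Subgroup.zpowers b).subtype] ↥(Subgroup.zpowers b),
      (x * h * x⁻¹).right = h.right := by
    intro x h
    rw [SemidirectProduct.mul_right, SemidirectProduct.mul_right, SemidirectProduct.inv_right,
      mul_inv_cancel_comm]
  -- key normalizer criterion
  have hNkey : ∀ x : A ⋊[(Subgroup.zpowers b).subtype] ↥(Subgroup.zpowers b),
      x.left ∈ (f.comp f).ker →
      ∀ h : A ⋊[(Subgroup.zpowers b).subtype] ↥(Subgroup.zpowers b),
        (h ∈ E' ↔ x * h * x⁻¹ ∈ E') := by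
    intro x hx h
    have hg : b (f x.left) = f x.left := (hmemK2 x.left).1 hx
    have hufix : ∀ t : MulAut A, t ∈ Subgroup.zpowers b → t (f x.left) = f x.left :=
      aux_fix_zpow b (f x.left) hg
    have huba : (h.right : MulAut A) (b x.left) = (h.right : MulAut A) x.left * f x.left := by
      rw [hba x.left, map_mul, hufix _ h.right.2]
    rw [hmemE', hmemE', hconjL x h]
    have hbL : b (x.left * (x.right : MulAut A) h.left * ((h.right : MulAut A) x.left)⁻¹)
        = x.left * (x.right : MulAut A) (b h.left) * ((h.right : MulAut A) x.left)⁻¹ := by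
      rw [map_mul, map_mul, map_inv, aux_comm_zpow b _ x.right.2, aux_comm_zpow b _ h.right.2,
        huba, hba x.left]
      exact aux_cg x.left (f x.left) ((x.right : MulAut A) (b h.left))
        ((h.right : MulAut A) x.left)
    constructor
    · intro hc
      rw [hbL, hc]
    · intro hL
      rw [hbL] at hL
      have h2 : (x.right : MulAut A) (b h.left) * ((h.right : MulAut A) x.left)⁻¹
          = (x.right : MulAut A) h.left * ((h.right : MulAut A) x.left)⁻¹ :=
        mul_left_cancel (a := x.left) (by rw [← mul_assoc, ← mul_assoc]; exact hL)
      have h1 := mul_right_cancel h2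
      exact (x.right : MulAut A).injective h1
  -- the normalizer subgroup
  let N' : Subgroup (A ⋊[(Subgroup.zpowers b).subtype] ↥(Subgroup.zpowers b)) :=
    { carrier := {x | x.left ∈ (f.comp f).ker}
      one_mem' := (f.comp f).ker.one_mem
      mul_mem' := by
        intro x y hx hy
        have hx' : x.left ∈ (f.comp f).ker := hx
        have hy' : y.left ∈ (f.comp f).ker := hy
        show (x * y).left ∈ (f.comp f).ker
        rw [SemidirectProduct.mul_left]
        exact Subgroup.mul_mem _ hx' (hK2inv _ x.right.2 _ hy')
      inv_mem' := by
        intro x hx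
        have hx' : x.left ∈ (f.comp f).ker := hx
        show (x⁻¹).left ∈ (f.comp f).ker
        rw [SemidirectProduct.inv_left]
        exact hK2inv _ (x.right⁻¹).2 _ (Subgroup.inv_mem _ hx') }
  have hmemN' : ∀ x : A ⋊[(Subgroup.zpowers b).subtype] ↥(Subgroup.zpowers b),
      x ∈ N' ↔ x.left ∈ (f.comp f).ker := fun _ => Iff.rfl
  have hnorm : Subgroup.normalizer (E' : Set _) = N' := by
    ext x
    rw [Subgroup.mem_normalizer_iff, hmemN']
    constructor
    · intro hx
      have h := (hx (SemidirectProduct.inr β0)).1 (by rw [hmemE']; exact map_one b)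
      rw [hmemE', hconjL x (SemidirectProduct.inr β0)] at h
      simp only [SemidirectProduct.left_inr, SemidirectProduct.right_inr, map_one, mul_one] at h
      -- h : b (x.left * (b x.left)⁻¹) = x.left * (b x.left)⁻¹  (with β0 coercion)
      have h' : x.left * (b x.left)⁻¹ = (f x.left)⁻¹ := by
        rw [hf]; rw [div_eq_mul_inv, mul_inv_rev, inv_inv, mul_comm]
      rw [h', map_inv] at h
      rw [hmemK2]
      exact inv_injective h
    · intro hx h
      exact hNkey x hx h
  -- cardinality of N'
  have hcardB : Nat.card ↥(Subgroup.zpowers b) = p := by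
    rw [Nat.card_zpowers, hb]
  have hcardN : Nat.card ↥N' = p ^ 3 := by
    have e : ↥N' ≃ ↥(f.comp f).ker × ↥(Subgroup.zpowers b) :=
      { toFun := fun x => (⟨x.1.left, x.2⟩, x.1.right)
        invFun := fun y => ⟨⟨y.1.1, y.2⟩, y.1.2⟩
        left_inv := fun x => rfl
        right_inv := fun y => rfl }
    rw [Nat.card_congr e, Nat.card_prod, hcardK2, hcardB]
    ring
  -- a noncentral element
  have hne : ∃ a0 : A, a0 ∈ (f.comp f).ker ∧ a0 ∉ f.ker := by
    by_contra hco
    push_neg at hco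
    have hle : (f.comp f).ker ≤ f.ker := fun a ha => hco a ha
    have heq : f.ker = (f.comp f).ker := le_antisymm hK1K2 hle
    have hcc : p ^ 2 = p := by rw [← hcardK2, ← heq, hcardK1]
    have h2 := hp.two_le
    rw [pow_two] at hcc
    nlinarith
  obtain ⟨a0, ha0K2, ha0K1⟩ := hne
  -- exponent p for elements of N'
  have hexpN : ∀ s : A ⋊[(Subgroup.zpowers b).subtype] ↥(Subgroup.zpowers b),
      s.left ∈ (f.comp f).ker → s ^ p = 1 := by
    intro s hs
    have hg : b (f s.left) = f s.left := (hmemK2 s.left).1 hs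
    set a := s.left with hadef
    set t := s.right with htdef
    set h0 := (t : MulAut A) a / a with hh0
    have hth : (t : MulAut A) a = a * h0 := (mul_div_cancel a ((t : MulAut A) a)).symm
    have hbh : b h0 = h0 := by
      rw [hh0, map_div, aux_comm_zpow b _ t.2, hba a, map_mul, aux_fix_zpow b (f a) hg _ t.2,
        mul_div_mul_comm, div_self', mul_one]
    have hfixh := aux_fix_zpow b h0 hbh
    have htpow : ∀ m : ℕ, ((t ^ m : ↥(Subgroup.zpowers b)) : MulAut A) a = a * h0 ^ m := by
      intro m
      induction m with
      | zero => simp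
      | succ m ih =>
        have hc : ((t ^ (m + 1) : ↥(Subgroup.zpowers b)) : MulAut A)
            = ((t ^ m : ↥(Subgroup.zpowers b)) : MulAut A) * (t : MulAut A) := by
          push_cast [pow_succ]
          rfl
        rw [hc, MulAut.mul_apply, hth, map_mul, ih, hfixh _ (t ^ m).2, pow_succ, mul_assoc]
    have hspow : ∀ m : ℕ, s ^ m
        = ⟨a ^ m * h0 ^ (m.choose 2), t ^ m⟩ := by
      intro m
      induction m with
      | zero =>
        refine SemidirectProduct.ext ?_ ?_ <;> simp
      | succ m ih =>
        rw [pow_succ, ih]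
        refine SemidirectProduct.ext ?_ ?_
        · rw [SemidirectProduct.mul_left]
          show a ^ m * h0 ^ (m.choose 2) * ((t ^ m : ↥(Subgroup.zpowers b)) : MulAut A) a
            = a ^ (m + 1) * h0 ^ ((m + 1).choose 2)
          rw [htpow m, mul_mul_mul_comm, ← pow_succ, ← pow_add]
          have : (m + 1).choose 2 = m.choose 2 + m := by
            rw [Nat.choose_succ_succ, Nat.choose_one_right, Nat.add_comm]
          rw [this]
        · rw [SemidirectProduct.mul_right]
          rfl
    have hdvd : p ∣ p.choose 2 := hp.dvd_choose_self (by norm_num) (by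
      rcases hp.two_le.lt_or_eq with h | h
      · exact h
      · exfalso
        rw [← h] at hodd
        exact (Nat.not_odd_iff_even.2 (by norm_num)) hodd)
    obtain ⟨c, hc⟩ := hdvd
    rw [hspow p]
    refine SemidirectProduct.ext ?_ ?_
    · show a ^ p * h0 ^ (p.choose 2) = 1
      rw [hexp a, hc, pow_mul, hexp h0, one_pow, one_mul]
    · show t ^ p = 1
      rw [← hcardB]
      exact pow_card_eq_one'
  refine ⟨by rw [hE0]; exact hcent, ?_, ?_, ?_⟩
  · rw [hE0, hnorm]
    exact hcardN
  · rw [hE0, hnorm]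
    intro hcomm
    have hx : (⟨a0, 1⟩ : A ⋊[(Subgroup.zpowers b).subtype] ↥(Subgroup.zpowers b)) ∈ N' := ha0K2
    have hy : (⟨1, β0⟩ : A ⋊[(Subgroup.zpowers b).subtype] ↥(Subgroup.zpowers b)) ∈ N' :=
      (f.comp f).ker.one_mem
    have h := hcomm ⟨_, hx⟩ ⟨_, hy⟩
    have h' := congrArg (fun z : ↥N' => (z : A ⋊[(Subgroup.zpowers b).subtype]
      ↥(Subgroup.zpowers b)).left) h
    simp only [Subgroup.coe_mul, SemidirectProduct.mul_left] at h'
    -- h' : a0 * φ 1 1 = 1 * φ β0 a0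
    have h'' : a0 = b a0 := by simpa using h'
    exact ha0K1 ((hmemK1 a0).2 h''.symm)
  · rw [hE0, hnorm]
    intro x
    have hx : ((x : ↥N') : A ⋊[(Subgroup.zpowers b).subtype] ↥(Subgroup.zpowers b)) ^ p = 1 :=
      hexpN _ x.2
    refine Subtype.ext ?_
    simp only [SubmonoidClass.coe_pow, OneMemClass.coe_one, hx]


/-- With `p` an odd prime, `A = (C_p)^3`, `B = ⟨b⟩ ≤ Aut(A)` of
order `p` acting by a single Jordan block (so `A` is an indecomposable
`B`-module), `S = A ⋊ B`, `Z = Z(S)` and `E = Z × B ≤ S` (the subgroup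
generated by the center and the complement `B`), one has `C_S(E) = E`, and
`N_S(E)` is a nonabelian group of order `p^3` and exponent `p`. -/
theorem stmt17 (p : ℕ) (hp : p.Prime) (hodd : Odd p)
    (A : Type*) [CommGroup A] [Fintype A]
    (hcard : Nat.card A = p ^ 3) (hexp : ∀ a : A, a ^ p = 1)
    (b : MulAut A) (hb : orderOf b = p)
    (hindec : ¬∃ U V : Subgroup A,
      (∀ a ∈ U, b a ∈ U) ∧ (∀ a ∈ V, b a ∈ V) ∧
      U ≠ ⊥ ∧ V ≠ ⊥ ∧ U ⊓ V = ⊥ ∧ U ⊔ V = ⊤) :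
    letI S := A ⋊[(Subgroup.zpowers b).subtype] ↥(Subgroup.zpowers b)
    letI E : Subgroup S :=
      Subgroup.center S ⊔
        (SemidirectProduct.inr : ↥(Subgroup.zpowers b) →* S).range
    Subgroup.centralizer (E : Set S) = E ∧
    Nat.card ↥(Subgroup.normalizer (E : Set S)) = p ^ 3 ∧
    (¬∀ x y : ↥(Subgroup.normalizer (E : Set S)), x * y = y * x) ∧
    (∀ x : ↥(Subgroup.normalizer (E : Set S)), x ^ p = 1) := by
  haveI : Fact p.Prime := ⟨hp⟩
  haveI : NeZero p := ⟨hp.ne_zero⟩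
  letI : Module (ZMod p) (Additive A) := zmodModuleOfExp p (Additive A) (fun y => by
    have h := congrArg Additive.ofMul (hexp (Additive.toMul y))
    rwa [ofMul_pow, ofMul_one, ofMul_toMul] at h)
  let β : Module.End (ZMod p) (Additive A) :=
    (MonoidHom.toAdditive (b : A →* A)).toZModLinearMap p
  have hβ : ∀ a : A, β (Additive.ofMul a) = Additive.ofMul (b a) := fun a => rfl
  let ν : Module.End (ZMod p) (Additive A) := β - 1
  have hν : ∀ a : A, ν (Additive.ofMul a) = Additive.ofMul (b a / a) := by
    intro a
    show β (Additive.ofMul a) - (1 : Module.End (ZMod p) (Additive A)) (Additive.ofMul a) = _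
    rw [hβ, Module.End.one_apply, ofMul_div]
  have hbp : b ^ p = 1 := by rw [← hb, pow_orderOf_eq_one]
  have hνp : ν ^ p = 0 := stmt17_nupow p hp hodd hexp b hbp β hβ
  let oiso : Submodule (ZMod p) (Additive A) ≃o Subgroup A :=
    (AddSubgroup.toZModSubmodule p).symm.trans Subgroup.toAddSubgroup.symm
  have hmem : ∀ (U : Submodule (ZMod p) (Additive A)) (a : A),
      a ∈ oiso U ↔ Additive.ofMul a ∈ U := fun U a => Iff.rfl
  have hindec' : ¬∃ U V : Submodule (ZMod p) (Additive A),
      (∀ x ∈ U, ν x ∈ U) ∧ (∀ x ∈ V, ν x ∈ V) ∧ U ≠ ⊥ ∧ V ≠ ⊥ ∧ U ⊓ V = ⊥ ∧ U ⊔ V = ⊤ := by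
    rintro ⟨U, V, hU, hV, hUne, hVne, hUV, hUVtop⟩
    refine hindec ⟨oiso U, oiso V, ?_, ?_, ?_, ?_, ?_, ?_⟩
    · intro a ha
      rw [hmem] at ha ⊢
      have h := U.add_mem (hU _ ha) ha
      rwa [hν, ofMul_div, sub_add_cancel] at h
    · intro a ha
      rw [hmem] at ha ⊢
      have h := V.add_mem (hV _ ha) ha
      rwa [hν, ofMul_div, sub_add_cancel] at h
    · exact fun h => hUne (oiso.injective (by rw [h, map_bot]))
    · exact fun h => hVne (oiso.injective (by rw [h, map_bot]))
    · rw [← oiso.map_inf, hUV, map_bot]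
    · rw [← oiso.map_sup, hUVtop, map_top]
  have hcardM : Nat.card (Additive A) = p ^ 3 :=
    (Nat.card_congr (Additive.toMul : Additive A ≃ A)).trans hcard
  obtain ⟨hcK, hcK2⟩ := stmt17_lin p hp (Additive A) hcardM ν hνp hindec'
  -- the homomorphism f
  let f : A →* A :=
    { toFun := fun a => b a / a
      map_one' := by simp
      map_mul' := fun x y => by
        show b (x * y) / (x * y) = (b x / x) * (b y / y)
        rw [map_mul, mul_div_mul_comm] }
  have hf : ∀ a : A, f a = b a / a := fun _ => rfl
  have hνf : ∀ a : A, ν (Additive.ofMul a) = Additive.ofMul (f a) := hν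
  have hcardK1 : Nat.card f.ker = p := by
    rw [← hcK]
    refine Nat.card_congr ⟨fun x => ⟨Additive.ofMul x.1, ?_⟩,
      fun x => ⟨Additive.toMul x.1, ?_⟩, fun _ => rfl, fun _ => rfl⟩
    · rw [LinearMap.mem_ker, hνf, (f.mem_ker).1 x.2]
      rfl
    · have h := (LinearMap.mem_ker).1 x.2
      rw [show x.1 = Additive.ofMul (Additive.toMul x.1) from rfl, hνf] at h
      exact (f.mem_ker).2 (ofMul_eq_zero.1 h)
  have hcardK2 : Nat.card (f.comp f).ker = p ^ 2 := by
    rw [← hcK2]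
    have key : ∀ a : A, (ν * ν) (Additive.ofMul a) = Additive.ofMul (f (f a)) := by
      intro a
      rw [Module.End.mul_apply, hνf, hνf]
    refine Nat.card_congr ⟨fun x => ⟨Additive.ofMul x.1, ?_⟩,
      fun x => ⟨Additive.toMul x.1, ?_⟩, fun _ => rfl, fun _ => rfl⟩
    · rw [LinearMap.mem_ker, key]
      have h := MonoidHom.mem_ker.1 x.2
      rw [MonoidHom.comp_apply] at h
      rw [h]
      rfl
    · have h := (LinearMap.mem_ker).1 x.2
      rw [show x.1 = Additive.ofMul (Additive.toMul x.1) from rfl, key] at h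
      refine MonoidHom.mem_ker.2 ?_
      rw [MonoidHom.comp_apply]
      exact ofMul_eq_zero.1 h
  exact grptest p hp hodd A hcard hexp b hb f hf hcardK1 hcardK2
end
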